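/- Let L : M_d → M_d be a Hermitian-preserving linear map such that ⟨Γ, L⟩ ≥ 0 for every Γ ∈ D(d). Then for every r > 0 there exists η > 0 such that every Hermitian-preserving, unital, trace-preserving linear map Γ on M_d with ‖Γ‖₂ = 1, ⟨Γ, Ad_U⟩ ≥ 0 for all unitaries U ∈ M_d, and ⟨Γ, id⟩ < η satisfies ⟨Γ, L⟩ ≥ −r. -/

import Mathlib

noncomputable section
open scoped Kronecker
open Filter Topology Matrix

/-- `M_d`, the algebra of `d × d` complex matrices. -/
abbrev Md (d : ℕ) := Matrix (Fin d) (Fin d) ℂ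

/-- `Ad_U : X ↦ U* X U` for a unitary `U`. -/
def adU {d : ℕ} (U : Matrix.unitaryGroup (Fin d) ℂ) : Md d →ₗ[ℂ] Md d where
  toFun X := (U : Md d)ᴴ * X * (U : Md d)
  map_add' X Y := by simp [Matrix.mul_add, Matrix.add_mul]
  map_smul' c X := by simp [Matrix.mul_smul, Matrix.smul_mul]

/-- A linear map is completely positive if it has a Kraus decomposition. -/
def IsCP {d : ℕ} (Φ : Md d →ₗ[ℂ] Md d) : Prop :=
  ∃ (n : ℕ) (V : Fin n → Md d), ∀ X, Φ X = ∑ j, (V j)ᴴ * X * (V j)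

def IsUnital {d : ℕ} (Φ : Md d →ₗ[ℂ] Md d) : Prop := Φ 1 = 1

def IsTracePreserving {d : ℕ} (Φ : Md d →ₗ[ℂ] Md d) : Prop :=
  ∀ X, (Φ X).trace = X.trace

def IsHermitianPreserving {d : ℕ} (Φ : Md d →ₗ[ℂ] Md d) : Prop :=
  ∀ X, Φ Xᴴ = (Φ X)ᴴ

/-- A unital quantum channel: CP, unital and trace-preserving. -/
def IsUnitalChannel {d : ℕ} (Φ : Md d →ₗ[ℂ] Md d) : Prop :=
  IsCP Φ ∧ IsUnital Φ ∧ IsTracePreserving Φ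

/-- A mixed unitary channel: a convex combination of unitary conjugations. -/
def IsMixedUnitary {d : ℕ} (Φ : Md d →ₗ[ℂ] Md d) : Prop :=
  ∃ (ℓ : ℕ) (U : Fin ℓ → Matrix.unitaryGroup (Fin d) ℂ) (lam : Fin ℓ → ℝ),
    (∀ j, 0 ≤ lam j) ∧ (∀ j, lam j ≤ 1) ∧ (∑ j, lam j = 1) ∧
    Φ = ∑ j, (lam j : ℂ) • adU (U j)

/-- The Choi matrix `J(Φ) = (1/d) ∑_{i,j} E_{ij} ⊗ Φ(E_{ij})`. -/
def choi {d : ℕ} (Φ : Md d →ₗ[ℂ] Md d) : Matrix (Fin d × Fin d) (Fin d × Fin d) ℂ :=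
  (d : ℂ)⁻¹ • ∑ i : Fin d, ∑ j : Fin d,
    (Matrix.single i j (1 : ℂ)) ⊗ₖ Φ (Matrix.single i j (1 : ℂ))

/-- `⟨Φ, Ψ⟩ = tr(J(Φ)* J(Ψ))`; this is a real number whenever `Φ, Ψ` are
Hermitian-preserving, so we record its real part. -/
def pairRe {d : ℕ} (Φ Ψ : Md d →ₗ[ℂ] Md d) : ℝ := (((choi Φ)ᴴ * choi Ψ).trace).re

/-- The Hilbert–Schmidt (Choi) norm `‖Φ‖₂ = tr(J(Φ)* J(Φ))^{1/2}`. -/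
def hsNorm {d : ℕ} (Φ : Md d →ₗ[ℂ] Md d) : ℝ := Real.sqrt (pairRe Φ Φ)

attribute [local instance] Matrix.normedAddCommGroup Matrix.normedSpace

/-- The exponential `e^{tL}` of a linear map `L` on `M_d`. -/
def expL {d : ℕ} (L : Md d →ₗ[ℂ] Md d) (t : ℝ) : Md d →ₗ[ℂ] Md d :=
  letI : IsTopologicalRing (Md d →L[ℂ] Md d) :=
    @NonUnitalSeminormedRing.toIsTopologicalRing _
      (@ContinuousLinearMap.toNormedRing ℂ (Md d) _ _ _).toSeminormedRing.toNonUnitalSeminormedRing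
  ((NormedSpace.exp ((t : ℂ) • (LinearMap.toContinuousLinearMap L)) :
      Md d →L[ℂ] Md d)).toLinearMap

/-- Membership in `D(d)`: Hermitian-preserving, unital, trace-preserving maps `Γ` with
`⟨id, Γ⟩ = 0` and `⟨Ad_U, Γ⟩ ≥ 0` for all unitaries `U`. -/
def MemD {d : ℕ} (Γ : Md d →ₗ[ℂ] Md d) : Prop :=
  IsHermitianPreserving Γ ∧ IsUnital Γ ∧ IsTracePreserving Γ ∧
    pairRe LinearMap.id Γ = 0 ∧
    ∀ U : Matrix.unitaryGroup (Fin d) ℂ, 0 ≤ pairRe (adU U) Γ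
-- auxiliary lemmas, batch 1
lemma pairRe_comm {d : ℕ} (Φ Ψ : Md d →ₗ[ℂ] Md d) : pairRe Φ Ψ = pairRe Ψ Φ := by
  unfold pairRe
  have : ((choi Φ)ᴴ * choi Ψ).trace = star (((choi Ψ)ᴴ * choi Φ).trace) := by
    rw [← Matrix.trace_conjTranspose, Matrix.conjTranspose_mul, Matrix.conjTranspose_conjTranspose]
  rw [this, Complex.star_def, Complex.conj_re]

lemma adU_one {d : ℕ} : adU (1 : Matrix.unitaryGroup (Fin d) ℂ) = LinearMap.id := by
  apply LinearMap.ext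
  intro X
  simp [adU]

lemma choi_entry {d : ℕ} (Φ : Md d →ₗ[ℂ] Md d) (a k b l : Fin d) :
    choi Φ (a, k) (b, l) = (d : ℂ)⁻¹ * Φ (Matrix.single a b 1) k l := by
  unfold choi
  simp only [Matrix.smul_apply, Finset.sum_apply, Matrix.sum_apply, Matrix.kroneckerMap_apply,
    smul_eq_mul]
  congr 1
  rw [Finset.sum_eq_single a]
  · rw [Finset.sum_eq_single b]
    · simp [Matrix.single]
    · intro j _ hj; simp [Matrix.single, hj]
    · simp
  · intro i _ hi
    apply Finset.sum_eq_zero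
    intro j _
    simp [Matrix.single, hi]
  · simp
/-- Linear dependence on `M` of the inverse Choi construction, at a fixed `X`. -/
def unchoiAt {d : ℕ} (X : Md d) :
    Matrix (Fin d × Fin d) (Fin d × Fin d) ℂ →ₗ[ℂ] Md d where
  toFun M := (d : ℂ) • Matrix.of (fun k l => ∑ a, ∑ b, X a b * M (a, k) (b, l))
  map_add' M N := by
    ext k l
    simp only [Matrix.smul_apply, Matrix.of_apply, Matrix.add_apply, smul_eq_mul, mul_add,
      Finset.sum_add_distrib]
  map_smul' c M := by
    ext k l
    simp only [Matrix.smul_apply, Matrix.of_apply, smul_eq_mul, RingHom.id_apply, Finset.mul_sum]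
    exact Finset.sum_congr rfl fun _ _ => Finset.sum_congr rfl fun _ _ => by ring

/-- The inverse of the Choi map, as a linear map on `M_d`. -/
def unchoi {d : ℕ} (M : Matrix (Fin d × Fin d) (Fin d × Fin d) ℂ) : Md d →ₗ[ℂ] Md d where
  toFun X := unchoiAt X M
  map_add' X Y := by
    ext k l
    simp only [unchoiAt, LinearMap.coe_mk, AddHom.coe_mk, Matrix.smul_apply, Matrix.of_apply,
      Matrix.add_apply, smul_eq_mul, add_mul, Finset.sum_add_distrib]
    ring
  map_smul' c X := by
    ext k l
    simp only [unchoiAt, LinearMap.coe_mk, AddHom.coe_mk, Matrix.smul_apply, Matrix.of_apply,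
      Matrix.smul_apply, smul_eq_mul, RingHom.id_apply, Finset.mul_sum]
    exact Finset.sum_congr rfl fun _ _ => Finset.sum_congr rfl fun _ _ => by ring

lemma unchoi_choi {d : ℕ} (hd : d ≠ 0) (Φ : Md d →ₗ[ℂ] Md d) : unchoi (choi Φ) = Φ := by
  apply LinearMap.ext
  intro X
  funext k l
  have hd' : (d : ℂ) ≠ 0 := Nat.cast_ne_zero.mpr hd
  show ((d : ℂ) • Matrix.of fun k l => ∑ a, ∑ b, X a b * choi Φ (a, k) (b, l)) k l = Φ X k l
  simp only [Matrix.smul_apply, Matrix.of_apply, smul_eq_mul, choi_entry]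
  conv_rhs => rw [Matrix.matrix_eq_sum_single X]
  rw [map_sum]
  simp only [map_sum, Matrix.sum_apply]
  rw [Finset.mul_sum]
  congr 1; funext a
  rw [Finset.mul_sum]
  congr 1; funext b
  rw [show Matrix.single a b (X a b) = X a b • Matrix.single a b (1 : ℂ) by
    rw [Matrix.smul_single]; norm_num]
  rw [LinearMap.map_smul, Matrix.smul_apply, smul_eq_mul]
  field_simp

lemma choi_unchoi {d : ℕ} (hd : d ≠ 0) (M : Matrix (Fin d × Fin d) (Fin d × Fin d) ℂ) :
    choi (unchoi M) = M := by
  have hd' : (d : ℂ) ≠ 0 := Nat.cast_ne_zero.mpr hd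
  ext ⟨a, k⟩ ⟨b, l⟩
  rw [choi_entry]
  show (d : ℂ)⁻¹ * (((d : ℂ) • Matrix.of fun k l =>
      ∑ a', ∑ b', Matrix.single a b (1:ℂ) a' b' * M (a', k) (b', l)) k l) = M (a, k) (b, l)
  simp only [Matrix.smul_apply, Matrix.of_apply, smul_eq_mul]
  rw [Finset.sum_eq_single a]
  · rw [Finset.sum_eq_single b]
    · simp [Matrix.single]; field_simp
    · intro j _ hj
      simp only [Matrix.single, Matrix.of_apply]
      rw [if_neg (by tauto), zero_mul]
    · simp
  · intro i _ hi
    apply Finset.sum_eq_zero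
    intro j _
    simp only [Matrix.single, Matrix.of_apply]
    rw [if_neg (by tauto), zero_mul]
  · simp
lemma pairRe_self_eq {d : ℕ} (Γ : Md d →ₗ[ℂ] Md d) :
    pairRe Γ Γ = ∑ p, ∑ q, Complex.normSq (choi Γ q p) := by
  unfold pairRe
  simp only [Matrix.trace, Matrix.diag, Matrix.mul_apply, Matrix.conjTranspose_apply]
  rw [Complex.re_sum]
  refine Finset.sum_congr rfl fun p _ => ?_
  rw [Complex.re_sum]
  refine Finset.sum_congr rfl fun q _ => ?_
  simp [Complex.star_def, Complex.normSq_eq_conj_mul_self]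
  rw [Complex.normSq_apply]

lemma norm_choi_le_one {d : ℕ} (Γ : Md d →ₗ[ℂ] Md d) (h : hsNorm Γ = 1) : ‖choi Γ‖ ≤ 1 := by
  have h1 : pairRe Γ Γ = 1 := by
    have := h
    unfold hsNorm at this
    exact Real.sqrt_eq_one.mp this
  rw [pairRe_self_eq] at h1
  rw [Matrix.norm_le_iff zero_le_one]
  intro a b
  have hle : Complex.normSq (choi Γ a b) ≤ 1 := by
    calc Complex.normSq (choi Γ a b)
        ≤ ∑ q, Complex.normSq (choi Γ q b) := by
          exact Finset.single_le_sum (f := fun q => Complex.normSq (choi Γ q b)) (fun q _ => Complex.normSq_nonneg _) (Finset.mem_univ a)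
      _ ≤ ∑ p, ∑ q, Complex.normSq (choi Γ q p) := by
          exact Finset.single_le_sum (f := fun p => ∑ q, Complex.normSq (choi Γ q p))
            (fun p _ => Finset.sum_nonneg fun q _ => Complex.normSq_nonneg _) (Finset.mem_univ b)
      _ = 1 := h1
  calc ‖choi Γ a b‖ = Real.sqrt (Complex.normSq (choi Γ a b)) := by
        rw [Complex.norm_def]
    _ ≤ Real.sqrt 1 := Real.sqrt_le_sqrt hle
    _ = 1 := Real.sqrt_one

/-- if `⟨Γ, L⟩ ≥ 0` for all `Γ ∈ D(d)`, then for every `r > 0` there is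
`η > 0` such that every norm-one `Γ` in the dual cone with `⟨Γ, id⟩ < η` satisfies
`⟨Γ, L⟩ ≥ -r`. -/
theorem stmt_13 (d : ℕ) (L : Md d →ₗ[ℂ] Md d) (hLh : IsHermitianPreserving L)
    (hL : ∀ Γ : Md d →ₗ[ℂ] Md d, MemD Γ → 0 ≤ pairRe Γ L) :
    ∀ r : ℝ, 0 < r → ∃ η : ℝ, 0 < η ∧
      ∀ Γ : Md d →ₗ[ℂ] Md d,
        IsHermitianPreserving Γ → IsUnital Γ → IsTracePreserving Γ →
        hsNorm Γ = 1 →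
        (∀ U : Matrix.unitaryGroup (Fin d) ℂ, 0 ≤ pairRe Γ (adU U)) →
        pairRe Γ LinearMap.id < η →
        -r ≤ pairRe Γ L := by

  intro r hr
  by_cases hd : d = 0
  · subst hd
    refine ⟨1, one_pos, fun Γ _ _ _ hnorm _ _ => ?_⟩
    exfalso
    have h1 : pairRe Γ Γ = 1 := Real.sqrt_eq_one.mp hnorm
    have h0 : pairRe Γ Γ = 0 := by simp [pairRe, Matrix.trace]
    linarith
  · by_contra hcon
    push_neg at hcon
    have H := fun n : ℕ => hcon (1 / (n + 1)) (by positivity)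
    choose Γs hHP hU hTP hN hC hid hLval using H
    set Ms : ℕ → Matrix (Fin d × Fin d) (Fin d × Fin d) ℂ := fun n => choi (Γs n) with hMs
    have hball : ∀ n, Ms n ∈ Metric.closedBall (0 : Matrix (Fin d × Fin d) (Fin d × Fin d) ℂ) 1 := by
      intro n
      rw [Metric.mem_closedBall, dist_zero_right]
      exact norm_choi_le_one (Γs n) (hN n)
    obtain ⟨M, _, φ, hφ, hlim⟩ :=
      (isCompact_closedBall (0 : Matrix (Fin d × Fin d) (Fin d × Fin d) ℂ) 1).tendsto_subseq hball
    set Γ : Md d →ₗ[ℂ] Md d := unchoi M with hΓ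
    have hcu : choi Γ = M := choi_unchoi hd M
    have huc : ∀ n, unchoi (Ms n) = Γs n := fun n => unchoi_choi hd (Γs n)
    -- pointwise convergence
    have hptw : ∀ X : Md d, Filter.Tendsto (fun k => Γs (φ k) X) atTop (𝓝 (Γ X)) := by
      intro X
      have hc : Continuous fun N : Matrix (Fin d × Fin d) (Fin d × Fin d) ℂ => unchoiAt X N :=
        (unchoiAt X).continuous_of_finiteDimensional
      have := (hc.tendsto M).comp hlim
      rw [show unchoiAt X M = Γ X from rfl] at this
      refine this.congr fun k => ?_
      show unchoi (Ms (φ k)) X = Γs (φ k) X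
      rw [huc]
    -- pairing convergence, second slot
    have hpair2 : ∀ Ψ : Md d →ₗ[ℂ] Md d,
        Filter.Tendsto (fun k => pairRe Ψ (Γs (φ k))) atTop (𝓝 (pairRe Ψ Γ)) := by
      intro Ψ
      have hc : Continuous fun N : Matrix (Fin d × Fin d) (Fin d × Fin d) ℂ =>
          (((choi Ψ)ᴴ * N).trace).re :=
        Complex.continuous_re.comp ((continuous_const.matrix_mul continuous_id).matrix_trace)
      have := (hc.tendsto M).comp hlim
      simp only [Function.comp_def] at this
      have h1 : pairRe Ψ Γ = (((choi Ψ)ᴴ * M).trace).re := by rw [pairRe, hcu]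
      rw [← h1] at this
      exact this
    -- pairing convergence, first slot
    have hpair1 : Filter.Tendsto (fun k => pairRe (Γs (φ k)) L) atTop (𝓝 (pairRe Γ L)) := by
      have hc : Continuous fun N : Matrix (Fin d × Fin d) (Fin d × Fin d) ℂ =>
          ((Nᴴ * choi L).trace).re :=
        Complex.continuous_re.comp
          (((continuous_id.matrix_conjTranspose).matrix_mul continuous_const).matrix_trace)
      have := (hc.tendsto M).comp hlim
      simp only [Function.comp_def] at this
      have h1 : pairRe Γ L = ((Mᴴ * choi L).trace).re := by rw [pairRe, hcu]
      rw [← h1] at this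
      exact this
    -- Γ is in D(d)
    have hΓHP : IsHermitianPreserving Γ := by
      intro X
      refine tendsto_nhds_unique (hptw Xᴴ) ?_
      have : Filter.Tendsto (fun k => (Γs (φ k) X)ᴴ) atTop (𝓝 ((Γ X)ᴴ)) :=
        ((continuous_id.matrix_conjTranspose).tendsto (Γ X)).comp (hptw X)
      have heq : (fun k => (Γs (φ k) X)ᴴ) = fun k => Γs (φ k) Xᴴ := by
        funext k; rw [hHP (φ k) X]
      rwa [heq] at this
    have hΓU : IsUnital Γ := by
      refine tendsto_nhds_unique (hptw 1) ?_
      have heq : (fun k => Γs (φ k) 1) = fun _ => (1 : Md d) := by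
        funext k; exact hU (φ k)
      rw [heq]
      exact tendsto_const_nhds
    have hΓTP : IsTracePreserving Γ := by
      intro X
      have h1 : Filter.Tendsto (fun k => (Γs (φ k) X).trace) atTop (𝓝 ((Γ X).trace)) :=
        ((continuous_id.matrix_trace).tendsto (Γ X)).comp (hptw X)
      have heq : (fun k => (Γs (φ k) X).trace) = fun _ => X.trace := by
        funext k; exact hTP (φ k) X
      rw [heq] at h1
      exact tendsto_nhds_unique h1 tendsto_const_nhds
    have hΓid : pairRe LinearMap.id Γ = 0 := by
      have hto := hpair2 LinearMap.id
      have hlow : ∀ k, (0 : ℝ) ≤ pairRe LinearMap.id (Γs (φ k)) := by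
        intro k
        rw [pairRe_comm]
        have := hC (φ k) 1
        rwa [adU_one] at this
      have hupp : ∀ k, pairRe LinearMap.id (Γs (φ k)) ≤ 1 / (φ k + 1) := by
        intro k
        rw [pairRe_comm]
        exact le_of_lt (hid (φ k))
      have hsq : Filter.Tendsto (fun k : ℕ => (1 : ℝ) / (φ k + 1)) atTop (𝓝 0) :=
        tendsto_one_div_add_atTop_nhds_zero_nat.comp hφ.tendsto_atTop
      have h0 : Filter.Tendsto (fun k => pairRe LinearMap.id (Γs (φ k))) atTop (𝓝 0) :=
        tendsto_of_tendsto_of_tendsto_of_le_of_le tendsto_const_nhds hsq hlow hupp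
      exact tendsto_nhds_unique hto h0
    have hΓC : ∀ U : Matrix.unitaryGroup (Fin d) ℂ, 0 ≤ pairRe (adU U) Γ := by
      intro U
      refine ge_of_tendsto' (hpair2 (adU U)) fun k => ?_
      rw [pairRe_comm]
      exact hC (φ k) U
    have hmem : MemD Γ := ⟨hΓHP, hΓU, hΓTP, hΓid, hΓC⟩
    have hpos : 0 ≤ pairRe Γ L := hL Γ hmem
    have hneg : pairRe Γ L ≤ -r :=
      le_of_tendsto' hpair1 fun k => le_of_lt (hLval (φ k))
    linarith
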